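/- arXiv:2005.04406 — 2 statements merged into one kernel-verified Lean document; each statement's English description precedes it below -/
import Mathlib

section
/- Let (ρ_i, χ_i)_{i≥0} be an essential continuous MacLane chain of stable degree m on K[x], let φ ∈ KP_∞, let t = t_∞(φ) be its numerical character, and let i_0 be an index such that t_i(φ) = t for all i ≥ i_0. For each j ≥ 1 write the χ_j-expansion φ = Σ_s a_{s,j} χ_j^s. Then for all indices i, j with i_0 < i < j one has φ ∼_{ρ_i} a_{t,j}·χ_j^t. -/
open Polynomial

namespace KeyPolPaper

variable {K : Type*} [Field K] {Λ : Type*} [AddCommGroup Λ] [LinearOrder Λ] [IsOrderedAddMonoid Λ]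

/-- A valuation on `F[X]` with values in `Λ ∪ {∞}`: multiplicative, satisfies the
ultrametric inequality, and is finite on nonzero constants. -/
def IsValuation {F : Type*} [Field F] (w : F[X] → WithTop Λ) : Prop :=
  w 0 = ⊤ ∧ (∀ f g : F[X], w (f * g) = w f + w g) ∧
    (∀ f g : F[X], min (w f) (w g) ≤ w (f + g)) ∧
    ∀ a : F, a ≠ 0 → w (C a) ≠ ⊤

/-- `μ ≤ ν` for valuations on `K[X]`. -/
def ValLE (μ ν : K[X] → WithTop Λ) : Prop := ∀ f : K[X], μ f ≤ ν f

/-- `μ < ν` for valuations on `K[X]`. -/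
def ValLT (μ ν : K[X] → WithTop Λ) : Prop := ValLE μ ν ∧ μ ≠ ν

/-- ν-equivalence: `f ∼_ν g` iff `ν (f - g) > ν f`. -/
def VEquiv (ν : K[X] → WithTop Λ) (f g : K[X]) : Prop := ν f < ν (f - g)

/-- ν-divisibility: `h ∣_ν g` iff `g ∼_ν q * h` for some `q`. -/
def VDvd (ν : K[X] → WithTop Λ) (h g : K[X]) : Prop := ∃ q : K[X], VEquiv ν g (q * h)

/-- MacLane–Vaquié key polynomial: monic, ν-minimal and ν-irreducible. -/
def IsMLVKey (ν : K[X] → WithTop Λ) (φ : K[X]) : Prop :=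
  φ.Monic ∧ (∀ f : K[X], f ≠ 0 → f.natDegree < φ.natDegree → ¬ VDvd ν φ f) ∧
    ¬ VDvd ν φ 1 ∧ ∀ f g : K[X], VDvd ν φ (f * g) → VDvd ν φ f ∨ VDvd ν φ g

/-- `e` is the value `ε(f) = max_{b ≥ 1} (ν f - ν (∂_b f)) / b`; phrased multiplicatively,
`e` satisfies `ν f ≤ ν (∂_b f) + b • e` for all `b ≥ 1`, with equality for some `b ≥ 1`.
If `ν f = ∞` then `ε(f) = ∞`. -/
def IsEps (ν : K[X] → WithTop Λ) (f : K[X]) (e : WithTop Λ) : Prop :=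
  (ν f = ⊤ ∧ e = ⊤) ∨
    (ν f ≠ ⊤ ∧ (∀ b : ℕ, 1 ≤ b → ν f ≤ ν (hasseDeriv b f) + b • e) ∧
      ∃ b : ℕ, 1 ≤ b ∧ ν f = ν (hasseDeriv b f) + b • e)

/-- The invariant `ε(f)`; well defined (for non-constant `f`) since `Λ` is divisible and
the defining property determines `e` uniquely. -/
noncomputable def eps (ν : K[X] → WithTop Λ) (f : K[X]) : WithTop Λ :=
  letI := Classical.propDecidable (∃ e : WithTop Λ, IsEps ν f e)
  if h : ∃ e : WithTop Λ, IsEps ν f e then h.choose else ⊤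

/-- The set `I(f)` of indices `b ≥ 1` with `ν (∂_b f) = ν f - b • ε(f)`. -/
def epsAttain (ν : K[X] → WithTop Λ) (f : K[X]) : Set ℕ :=
  {b : ℕ | 1 ≤ b ∧ ν f = ν (hasseDeriv b f) + b • eps ν f}

/-- Abstract key polynomial for `ν`. -/
def IsKeyPoly (ν : K[X] → WithTop Λ) (Q : K[X]) : Prop :=
  Q.Monic ∧ 0 < Q.natDegree ∧
    ∀ f : K[X], 0 < f.natDegree → f.natDegree < Q.natDegree → eps ν f < eps ν Q

/-- The `s`-th coefficient of the canonical `Q`-expansion `f = Σ_s a_s Q^s`,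
`deg a_s < deg Q`. -/
noncomputable def qCoeff (Q f : K[X]) (s : ℕ) : K[X] := ((· /ₘ Q)^[s] f) %ₘ Q

/-- The truncation `ν_Q (f) = min_s ν (a_s Q^s)`. -/
noncomputable def trunc (ν : K[X] → WithTop Λ) (Q f : K[X]) : WithTop Λ :=
  (Finset.range (f.natDegree + 1)).inf fun s => ν (qCoeff Q f s * Q ^ s)

/-- `S_{ν,Q}(f)`: the set of indices attaining the minimum in `ν_Q(f)`. -/
def attain (ν : K[X] → WithTop Λ) (Q f : K[X]) : Set ℕ :=
  {s : ℕ | ν (qCoeff Q f s * Q ^ s) = trunc ν Q f}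

/-- The augmented valuation `[μ; φ, γ] (f) = min_s (μ (a_s) + s • γ)` on φ-expansions. -/
noncomputable def augVal (μ : K[X] → WithTop Λ) (φ : K[X]) (γ : WithTop Λ) (f : K[X]) :
    WithTop Λ :=
  (Finset.range (f.natDegree + 1)).inf fun s => μ (qCoeff φ f s) + s • γ

/-- `Φ_{μ,ν}`: monic polynomials of minimal degree with `μ φ < ν φ`. -/
def PhiSet (μ ν : K[X] → WithTop Λ) : Set K[X] :=
  {φ : K[X] | φ.Monic ∧ μ φ < ν φ ∧
    ∀ ψ : K[X], ψ.Monic → μ ψ < ν ψ → φ.natDegree ≤ ψ.natDegree}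

/-- `mult f`: the least `b ≥ 1` with `∂_b f ≠ 0`. -/
noncomputable def multOf (f : K[X]) : ℕ := sInf {b : ℕ | 1 ≤ b ∧ hasseDeriv b f ≠ 0}

/-- Abstract limit key polynomial for `ν` (conditions (K1)-(K4)). -/
def IsLimitKeyPoly (ν : K[X] → WithTop Λ) (Q : K[X]) : Prop :=
  Q.Monic ∧
    ∃ Qm : K[X], IsKeyPoly ν Qm ∧ ValLT (trunc ν Qm) ν ∧
      (∃ χ ∈ PhiSet (trunc ν Qm) ν, Qm.natDegree = χ.natDegree) ∧
      (∀ χ ∈ PhiSet (trunc ν Qm) ν, ∃ χ' ∈ PhiSet (trunc ν Qm) ν, ν χ < ν χ') ∧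
      (∀ χ ∈ PhiSet (trunc ν Qm) ν, trunc ν χ Q < ν Q) ∧
      ∀ Q' : K[X], Q'.Monic →
        (∀ χ ∈ PhiSet (trunc ν Qm) ν, trunc ν χ Q' < ν Q') → Q.natDegree ≤ Q'.natDegree

/-- A continuous MacLane chain of stable degree `m`: valuations `ρ_0 < ρ_1 < ⋯`,
monic key polynomials `χ_i` (for `i ≥ 1`) of degree `m`, with
`ρ_i = [ρ_{i-1}; χ_i, β_i]`, `β_i = ρ_i (χ_i) > ρ_{i-1} (χ_i)` and
`χ_{i+1} ∤_{ρ_i} χ_i`. -/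
structure MacLaneChain (K : Type*) [Field K] (Λ : Type*) [AddCommGroup Λ] [LinearOrder Λ] [IsOrderedAddMonoid Λ] where
  m : ℕ
  hm : 0 < m
  ρ : ℕ → K[X] → WithTop Λ
  χ : ℕ → K[X]
  β : ℕ → Λ
  isVal : ∀ i : ℕ, IsValuation (ρ i)
  mono : ∀ i : ℕ, ValLT (ρ i) (ρ (i + 1))
  monicChi : ∀ i : ℕ, (χ (i + 1)).Monic
  degChi : ∀ i : ℕ, (χ (i + 1)).natDegree = m
  keyChi : ∀ i : ℕ, IsMLVKey (ρ i) (χ (i + 1))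
  beta_def : ∀ i : ℕ, ρ (i + 1) (χ (i + 1)) = (β (i + 1) : WithTop Λ)
  beta_lt : ∀ i : ℕ, ρ i (χ (i + 1)) < (β (i + 1) : WithTop Λ)
  aug : ∀ i : ℕ, ρ (i + 1) = augVal (ρ i) (χ (i + 1)) (β (i + 1) : WithTop Λ)
  not_dvd : ∀ i : ℕ, ¬ VDvd (ρ (i + 1)) (χ (i + 2)) (χ (i + 1))

/-- A polynomial is stable w.r.t. the chain if its values `ρ_i f` are eventually constant. -/
def MacLaneChain.Stable (ch : MacLaneChain K Λ) (f : K[X]) : Prop :=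
  ∃ i0 : ℕ, ∀ i : ℕ, i0 ≤ i → ch.ρ i f = ch.ρ i0 f

/-- The chain is essential: non-stable polynomials exist and all have degree `> m`. -/
def MacLaneChain.Essential (ch : MacLaneChain K Λ) : Prop :=
  (∃ f : K[X], ¬ ch.Stable f) ∧ ∀ f : K[X], ¬ ch.Stable f → ch.m < f.natDegree

/-- MLV limit key polynomials of the chain: monic non-stable polynomials of minimal
degree `m_∞`. -/
def MacLaneChain.IsLimKP (ch : MacLaneChain K Λ) (φ : K[X]) : Prop :=
  φ.Monic ∧ ¬ ch.Stable φ ∧ ∀ f : K[X], ¬ ch.Stable f → φ.natDegree ≤ f.natDegree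

/-- Convex subgroup of a linearly ordered abelian group. -/
def IsConvexSubgroup (H : AddSubgroup Λ) : Prop :=
  ∀ x y : Λ, 0 < x → x < y → y ∈ H → x ∈ H

/-- The value group of a valuation: the subgroup of `Λ` generated by the finite values. -/
def valueGroup {F : Type*} [Field F] (ρ : F[X] → WithTop Λ) : AddSubgroup Λ :=
  AddSubgroup.closure {γ : Λ | ∃ f : F[X], ρ f = (γ : WithTop Λ)}


variable [Module ℚ Λ]


section Stmt15Helpers
set_option linter.unusedSectionVars false

variable {ν : K[X] → WithTop Λ}

/-! ### WithTop helpers -/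

lemma wt_coe_nsmul (s : ℕ) (b : Λ) : ((s • b : Λ) : WithTop Λ) = s • (b : WithTop Λ) := by
  induction s with
  | zero => simp
  | succ n ih => rw [succ_nsmul, succ_nsmul, WithTop.coe_add, ih]

lemma wt_nsmul_ne_top {x : WithTop Λ} (hx : x ≠ ⊤) (s : ℕ) : s • x ≠ ⊤ := by
  lift x to Λ using hx
  rw [← wt_coe_nsmul]
  exact WithTop.coe_ne_top

lemma wt_min_add (x y c : WithTop Λ) : min (x + c) (y + c) = min x y + c := by
  rcases le_total x y with h | h
  · rw [min_eq_left h, min_eq_left (add_le_add_left h c)]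
  · rw [min_eq_right h, min_eq_right (add_le_add_left h c)]

lemma wt_min_add_left (x y c : WithTop Λ) : min (c + x) (c + y) = c + min x y := by
  rcases le_total x y with h | h
  · rw [min_eq_left h, min_eq_left (add_le_add_right h c)]
  · rw [min_eq_right h, min_eq_right (add_le_add_right h c)]

/-! ### Basic valuation lemmas -/

lemma IsValuation.one (hν : IsValuation ν) : ν 1 = 0 := by
  have h1 : ν 1 ≠ ⊤ := by
    have := hν.2.2.2 1 one_ne_zero
    rwa [map_one] at this
  have h2 : ν 1 = ν 1 + ν 1 := by
    have := hν.2.1 1 1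
    rwa [one_mul] at this
  lift (ν 1) to Λ using h1 with v hv
  rw [← WithTop.coe_add, WithTop.coe_inj] at h2
  have hv0 : (0 : Λ) = v := add_left_cancel (a := v) (by rw [add_zero]; exact h2)
  rw [← hv0, WithTop.coe_zero]

lemma IsValuation.neg (hν : IsValuation ν) (f : K[X]) : ν (-f) = ν f := by
  have hm : ν (C (-1 : K)) = 0 := by
    have h1 : ν (C (-1 : K)) ≠ ⊤ := hν.2.2.2 (-1) (by norm_num)
    have h2 : (0 : WithTop Λ) = ν (C (-1 : K)) + ν (C (-1 : K)) := by
      have := hν.2.1 (C (-1 : K)) (C (-1 : K))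
      rw [← C_mul, neg_mul_neg, one_mul, C_1, hν.one] at this
      exact this
    lift (ν (C (-1 : K))) to Λ using h1 with v hv
    rw [← WithTop.coe_add, ← WithTop.coe_zero, WithTop.coe_inj] at h2
    have hv0 : v = 0 := by
      rcases lt_trichotomy v 0 with h | h | h
      · exact absurd (h2 ▸ add_neg h h) (lt_irrefl _)
      · exact h
      · exact absurd (h2 ▸ add_pos h h) (lt_irrefl _)
    rw [hv0, WithTop.coe_zero]
  have : ν (-f) = ν (C (-1 : K) * f) := by norm_num
  rw [this, hν.2.1, hm, zero_add]

lemma IsValuation.sub_comm (hν : IsValuation ν) (f g : K[X]) : ν (f - g) = ν (g - f) := by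
  rw [← hν.neg (f - g), neg_sub]

lemma IsValuation.add_eq_left (hν : IsValuation ν) {f g : K[X]} (h : ν f < ν g) :
    ν (f + g) = ν f := by
  refine le_antisymm ?_ (le_trans (le_min le_rfl h.le) (hν.2.2.1 f g))
  by_contra hc
  push_neg at hc
  have h2 : ν f = ν ((f + g) + (-g)) := by ring_nf
  have h3 : min (ν (f + g)) (ν (-g)) ≤ ν f := h2 ▸ hν.2.2.1 (f + g) (-g)
  rw [hν.neg] at h3
  exact absurd h3 (not_le.mpr (lt_min hc h))

lemma IsValuation.pow (hν : IsValuation ν) (f : K[X]) (n : ℕ) : ν (f ^ n) = n • ν f := by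
  induction n with
  | zero => simpa using hν.one
  | succ n ih => rw [pow_succ, hν.2.1, ih, succ_nsmul]

lemma IsValuation.sum_lt (hν : IsValuation ν) {W : WithTop Λ} (hW : W ≠ ⊤)
    (S : Finset ℕ) (F : ℕ → K[X]) (h : ∀ s ∈ S, W < ν (F s)) :
    W < ν (∑ s ∈ S, F s) := by
  classical
  induction S using Finset.induction_on with
  | empty => simpa [hν.1] using hW.lt_top
  | @insert a S' hx ih =>
    rw [Finset.sum_insert hx]
    have h1 : W < ν (F a) := h a (Finset.mem_insert_self a S')
    have h2 : W < ν (∑ s ∈ S', F s) := ih fun s hs => h s (Finset.mem_insert_of_mem hs)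
    exact lt_of_lt_of_le (lt_min h1 h2) (hν.2.2.1 _ _)


/-! ### qCoeff lemmas -/

section QCoeff
variable {Q : K[X]}

lemma qCoeff_zero_left (Q : K[X]) (s : ℕ) : qCoeff Q 0 s = 0 := by
  unfold qCoeff
  rw [Function.iterate_fixed (by simp) s, zero_modByMonic]

lemma qCoeff_zero_idx (Q f : K[X]) : qCoeff Q f 0 = f %ₘ Q := rfl

lemma qCoeff_succ (Q f : K[X]) (s : ℕ) : qCoeff Q f (s + 1) = qCoeff Q (f /ₘ Q) s := by
  unfold qCoeff
  rw [Function.iterate_succ_apply]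

lemma qCoeff_degree_lt (hQ : Q.Monic) (f : K[X]) (s : ℕ) :
    (qCoeff Q f s).degree < Q.degree := degree_modByMonic_lt _ hQ

lemma qCoeff_add (hQ : Q.Monic) (f g : K[X]) (s : ℕ) :
    qCoeff Q (f + g) s = qCoeff Q f s + qCoeff Q g s := by
  induction s generalizing f g with
  | zero => exact add_modByMonic f g
  | succ n ih =>
    have hdiv : (f + g) /ₘ Q = f /ₘ Q + g /ₘ Q := by
      refine (div_modByMonic_unique (f /ₘ Q + g /ₘ Q) (f %ₘ Q + g %ₘ Q) hQ ⟨?_, ?_⟩).1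
      · rw [mul_add]
        have h1 := modByMonic_add_div f Q
        have h2 := modByMonic_add_div g Q
        calc f %ₘ Q + g %ₘ Q + (Q * (f /ₘ Q) + Q * (g /ₘ Q))
            = (f %ₘ Q + Q * (f /ₘ Q)) + (g %ₘ Q + Q * (g /ₘ Q)) := by ring
          _ = f + g := by rw [h1, h2]
      · exact lt_of_le_of_lt (degree_add_le _ _)
          (max_lt (degree_modByMonic_lt _ hQ) (degree_modByMonic_lt _ hQ))
    rw [qCoeff_succ, qCoeff_succ, qCoeff_succ, hdiv, ih]

lemma degree_lt_degree_of_natDegree_lt {f Q : K[X]} (hQ : Q.Monic) (h : f.natDegree < Q.natDegree) :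
    f.degree < Q.degree :=
  lt_of_le_of_lt degree_le_natDegree
    (by rw [degree_eq_natDegree hQ.ne_zero]; exact_mod_cast h)

lemma qCoeff_eq_zero (hQ : Q.Monic) (hQd : 0 < Q.natDegree) {f : K[X]} {s : ℕ}
    (h : f.natDegree < s) : qCoeff Q f s = 0 := by
  induction s generalizing f with
  | zero => omega
  | succ n ih =>
    rw [qCoeff_succ]
    by_cases hfq : f /ₘ Q = 0
    · rw [hfq, qCoeff_zero_left]
    have hge : Q.natDegree ≤ f.natDegree := by
      by_contra hlt
      push_neg at hlt
      exact hfq ((divByMonic_eq_zero_iff hQ).mpr (degree_lt_degree_of_natDegree_lt hQ hlt))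
    have : (f /ₘ Q).natDegree = f.natDegree - Q.natDegree := natDegree_divByMonic f hQ
    exact ih (by omega)

/-- The canonical expansion reconstructs `f`. -/
lemma qCoeff_sum (hQ : Q.Monic) (hQd : 0 < Q.natDegree) (f : K[X]) :
    ∑ s ∈ Finset.range (f.natDegree + 1), qCoeff Q f s * Q ^ s = f := by
  have key : ∀ n : ℕ, ∀ f : K[X], f.natDegree ≤ n →
      ∑ s ∈ Finset.range (n + 1), qCoeff Q f s * Q ^ s = f := by
    intro n
    induction n with
    | zero =>
      intro f hf
      have : f.degree < Q.degree := degree_lt_degree_of_natDegree_lt hQ (by omega)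
      simp [qCoeff_zero_idx, (modByMonic_eq_self_iff hQ).mpr this]
    | succ n ih =>
      intro f hf
      rw [Finset.sum_range_succ']
      have hG : ∑ s ∈ Finset.range (n + 1), qCoeff Q f (s + 1) * Q ^ (s + 1)
          = Q * (f /ₘ Q) := by
        have hdg : (f /ₘ Q).natDegree ≤ n := by
          have : (f /ₘ Q).natDegree = f.natDegree - Q.natDegree := natDegree_divByMonic f hQ
          omega
        calc ∑ s ∈ Finset.range (n + 1), qCoeff Q f (s + 1) * Q ^ (s + 1)
            = ∑ s ∈ Finset.range (n + 1), Q * (qCoeff Q (f /ₘ Q) s * Q ^ s) := by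
              refine Finset.sum_congr rfl fun s _ => ?_
              rw [qCoeff_succ, pow_succ]; ring
          _ = Q * ∑ s ∈ Finset.range (n + 1), qCoeff Q (f /ₘ Q) s * Q ^ s := by
              rw [Finset.mul_sum]
          _ = Q * (f /ₘ Q) := by rw [ih _ hdg]
      rw [hG, qCoeff_zero_idx, pow_zero, mul_one, add_comm]
      exact modByMonic_add_div f Q
  exact key f.natDegree f le_rfl

/-- Padded expansion. -/
lemma qCoeff_sum_pad (hQ : Q.Monic) (hQd : 0 < Q.natDegree) (f : K[X]) {N : ℕ}
    (h : f.natDegree + 1 ≤ N) :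
    ∑ s ∈ Finset.range N, qCoeff Q f s * Q ^ s = f := by
  have h2 : ∑ s ∈ Finset.range (f.natDegree + 1), qCoeff Q f s * Q ^ s
      = ∑ s ∈ Finset.range N, qCoeff Q f s * Q ^ s := by
    apply Finset.sum_subset (Finset.range_subset_range.mpr h)
    intro s _ hs
    rw [Finset.mem_range, not_lt] at hs
    rw [qCoeff_eq_zero hQ hQd (by omega), zero_mul]
  rw [← h2, qCoeff_sum hQ hQd f]

/-- Uniqueness: the coefficients of a low-degree-coefficient expansion are canonical. -/
lemma qCoeff_of_sum (hQ : Q.Monic) (c : ℕ → K[X]) (hc : ∀ u, (c u).degree < Q.degree) :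
    ∀ (s N : ℕ), qCoeff Q (∑ u ∈ Finset.range N, c u * Q ^ u) s
      = if s < N then c s else 0 := by
  have main : ∀ (c : ℕ → K[X]), (∀ u, (c u).degree < Q.degree) → ∀ (N : ℕ),
      (∑ u ∈ Finset.range (N + 1), c u * Q ^ u) %ₘ Q = c 0 ∧
      (∑ u ∈ Finset.range (N + 1), c u * Q ^ u) /ₘ Q
        = ∑ u ∈ Finset.range N, c (u + 1) * Q ^ u := by
    intro c hc N
    have hrw : ∑ u ∈ Finset.range (N + 1), c u * Q ^ u
        = c 0 + Q * ∑ u ∈ Finset.range N, c (u + 1) * Q ^ u := by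
      rw [Finset.sum_range_succ', Finset.mul_sum]
      have h2 : ∑ u ∈ Finset.range N, c (u + 1) * Q ^ (u + 1)
          = ∑ u ∈ Finset.range N, Q * (c (u + 1) * Q ^ u) :=
        Finset.sum_congr rfl fun u _ => by rw [pow_succ]; ring
      rw [h2, pow_zero, mul_one, add_comm]
    have h := div_modByMonic_unique (∑ u ∈ Finset.range N, c (u + 1) * Q ^ u) (c 0) hQ
      ⟨hrw.symm, hc 0⟩
    exact ⟨h.2, h.1⟩
  intro s
  induction s generalizing c hc with
  | zero =>
    intro N
    cases N with
    | zero => simp [qCoeff_zero_left]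
    | succ N => rw [qCoeff_zero_idx, (main c hc N).1, if_pos (by omega)]
  | succ s ih =>
    intro N
    cases N with
    | zero => simp [qCoeff_zero_left]
    | succ N =>
      rw [qCoeff_succ, (main c hc N).2, ih (fun u => c (u + 1)) (fun u => hc (u + 1)) N]
      by_cases h : s < N
      · rw [if_pos h, if_pos (by omega)]
      · rw [if_neg h, if_neg (by omega)]

end QCoeff

/-! ### augVal lemmas -/

section AugVal
variable {ν : K[X] → WithTop Λ} {Q : K[X]} {γ : WithTop Λ}

lemma augVal_def (ν : K[X] → WithTop Λ) (Q : K[X]) (γ : WithTop Λ) (f : K[X]) :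
    augVal ν Q γ f
      = (Finset.range (f.natDegree + 1)).inf fun s => ν (qCoeff Q f s) + s • γ := rfl

lemma augVal_zero (hν : IsValuation ν) (Q : K[X]) (γ : WithTop Λ) :
    augVal ν Q γ 0 = ⊤ := by
  rw [augVal_def]
  simp [qCoeff_zero_left, hν.1]

lemma augVal_le_term (hν : IsValuation ν) (hQ : Q.Monic) (hQd : 0 < Q.natDegree)
    (f : K[X]) (s : ℕ) : augVal ν Q γ f ≤ ν (qCoeff Q f s) + s • γ := by
  by_cases hs : s < f.natDegree + 1
  · exact Finset.inf_le (Finset.mem_range.mpr hs)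
  · rw [qCoeff_eq_zero hQ hQd (by omega), hν.1, top_add]
    exact le_top

lemma augVal_pad (hν : IsValuation ν) (hQ : Q.Monic) (hQd : 0 < Q.natDegree)
    (f : K[X]) {N : ℕ} (h : f.natDegree + 1 ≤ N) :
    (Finset.range N).inf (fun s => ν (qCoeff Q f s) + s • γ) = augVal ν Q γ f := by
  induction N with
  | zero => omega
  | succ N ih =>
    rcases Nat.lt_or_ge f.natDegree (N) with hlt | hge
    · rw [Finset.range_add_one, Finset.inf_insert, ih (by omega),
        qCoeff_eq_zero hQ hQd (by omega), hν.1, top_add]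
      exact top_inf_eq _
    · have : f.natDegree + 1 = N + 1 := by omega
      rw [← this, ← augVal_def]

private lemma augVal_rec_aux (hν : IsValuation ν) (hQ : Q.Monic) :
    ∀ (N : ℕ) (f : K[X]),
      (Finset.range (N + 1)).inf (fun s => ν (qCoeff Q f s) + s • γ)
      = min (ν (f %ₘ Q))
          (γ + (Finset.range N).inf (fun s => ν (qCoeff Q (f /ₘ Q) s) + s • γ)) := by
  intro N
  induction N with
  | zero =>
    intro f
    simp [qCoeff_zero_idx]
  | succ N ih =>
    intro f
    have hterm : ν (qCoeff Q f (N + 1)) + (N + 1) • γ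
        = γ + (ν (qCoeff Q (f /ₘ Q) N) + N • γ) := by
      rw [qCoeff_succ, succ_nsmul]
      simp [add_comm, add_left_comm, add_assoc]
    calc (Finset.range (N + 1 + 1)).inf (fun s => ν (qCoeff Q f s) + s • γ)
        = min (ν (qCoeff Q f (N + 1)) + (N + 1) • γ)
            ((Finset.range (N + 1)).inf (fun s => ν (qCoeff Q f s) + s • γ)) := by
          rw [Finset.range_add_one, Finset.inf_insert]
      _ = min (γ + (ν (qCoeff Q (f /ₘ Q) N) + N • γ))
            (min (ν (f %ₘ Q))
              (γ + (Finset.range N).inf (fun s => ν (qCoeff Q (f /ₘ Q) s) + s • γ))) := by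
          rw [hterm, ih f]
      _ = min (ν (f %ₘ Q))
            (min (γ + (ν (qCoeff Q (f /ₘ Q) N) + N • γ))
              (γ + (Finset.range N).inf (fun s => ν (qCoeff Q (f /ₘ Q) s) + s • γ))) := by
          rw [min_left_comm]
      _ = min (ν (f %ₘ Q))
            (γ + (Finset.range (N + 1)).inf (fun s => ν (qCoeff Q (f /ₘ Q) s) + s • γ)) := by
          rw [Finset.range_add_one, Finset.inf_insert, wt_min_add_left]

lemma augVal_rec (hν : IsValuation ν) (hQ : Q.Monic) (hQd : 0 < Q.natDegree) (f : K[X]) :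
    augVal ν Q γ f = min (ν (f %ₘ Q)) (γ + augVal ν Q γ (f /ₘ Q)) := by
  by_cases h0 : f.natDegree = 0
  · have hf : f.degree < Q.degree := degree_lt_degree_of_natDegree_lt hQ (by omega)
    have hq0 : f /ₘ Q = 0 := (divByMonic_eq_zero_iff hQ).mpr hf
    rw [augVal_def, h0, augVal_rec_aux (γ := γ) hν hQ 0 f, hq0, augVal_zero hν]
    simp
  · have hrec := augVal_rec_aux (γ := γ) hν hQ f.natDegree f
    rw [augVal_def, hrec]
    congr 1
    congr 1
    have hdg : (f /ₘ Q).natDegree + 1 ≤ f.natDegree := by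
      have : (f /ₘ Q).natDegree = f.natDegree - Q.natDegree := natDegree_divByMonic f hQ
      omega
    exact augVal_pad hν hQ hQd _ hdg

lemma augVal_deg_lt (hν : IsValuation ν) (hQ : Q.Monic) (hQd : 0 < Q.natDegree)
    {f : K[X]} (h : f.degree < Q.degree) : augVal ν Q γ f = ν f := by
  rw [augVal_rec hν hQ hQd, (modByMonic_eq_self_iff hQ).mpr h,
    (divByMonic_eq_zero_iff hQ).mpr h, augVal_zero hν, add_top]
  exact min_eq_left le_top

lemma augVal_add (hν : IsValuation ν) (hQ : Q.Monic) (hQd : 0 < Q.natDegree)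
    (f g : K[X]) : min (augVal ν Q γ f) (augVal ν Q γ g) ≤ augVal ν Q γ (f + g) := by
  obtain ⟨s0, _, hs0⟩ := Finset.exists_mem_eq_inf (Finset.range ((f + g).natDegree + 1))
    (by simp) (fun s => ν (qCoeff Q (f + g) s) + s • γ)
  rw [augVal_def ν Q γ (f + g), hs0, qCoeff_add hQ]
  calc min (augVal ν Q γ f) (augVal ν Q γ g)
      ≤ min (ν (qCoeff Q f s0) + s0 • γ) (ν (qCoeff Q g s0) + s0 • γ) :=
        min_le_min (augVal_le_term hν hQ hQd f s0) (augVal_le_term hν hQ hQd g s0)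
    _ = min (ν (qCoeff Q f s0)) (ν (qCoeff Q g s0)) + s0 • γ := wt_min_add _ _ _
    _ ≤ ν (qCoeff Q f s0 + qCoeff Q g s0) + s0 • γ :=
        add_le_add_left (hν.2.2.1 _ _) _

lemma augVal_sum_lt (hν : IsValuation ν) (hQ : Q.Monic) (hQd : 0 < Q.natDegree)
    {W : WithTop Λ} (hW : W ≠ ⊤) (S : Finset ℕ) (F : ℕ → K[X])
    (h : ∀ s ∈ S, W < augVal ν Q γ (F s)) :
    W < augVal ν Q γ (∑ s ∈ S, F s) := by
  classical
  induction S using Finset.induction_on with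
  | empty => simpa [augVal_zero hν] using hW.lt_top
  | @insert a S' hx ih =>
    rw [Finset.sum_insert hx]
    have h1 : W < augVal ν Q γ (F a) := h a (Finset.mem_insert_self a S')
    have h2 : W < augVal ν Q γ (∑ s ∈ S', F s) :=
      ih fun s hs => h s (Finset.mem_insert_of_mem hs)
    exact lt_of_lt_of_le (lt_min h1 h2) (augVal_add hν hQ hQd _ _)

/-- ν-minimality gives: the remainder and quotient terms have value at least `ν f`. -/
lemma fact_mod_div (hν : IsValuation ν) (hQ : Q.Monic)
    (hmin : ∀ c : K[X], c ≠ 0 → c.natDegree < Q.natDegree → ¬ VDvd ν Q c) (f : K[X]) :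
    ν f ≤ ν (f %ₘ Q) ∧ ν f ≤ ν (f /ₘ Q) + ν Q := by
  have hmod : ν f ≤ ν (f %ₘ Q) := by
    by_contra hc
    push_neg at hc
    have hc0 : f %ₘ Q ≠ 0 := by
      intro h0
      rw [h0, hν.1] at hc
      exact (not_top_lt hc)
    have hdeg : (f %ₘ Q).natDegree < Q.natDegree :=
      natDegree_lt_natDegree hc0 (degree_modByMonic_lt f hQ)
    refine hmin (f %ₘ Q) hc0 hdeg ⟨-(f /ₘ Q), ?_⟩
    unfold VEquiv
    have heq : f %ₘ Q - -(f /ₘ Q) * Q = f := by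
      linear_combination modByMonic_add_div f Q
    rw [heq]
    exact hc
  constructor
  · exact hmod
  · have : f /ₘ Q * Q = f - f %ₘ Q := by
      linear_combination modByMonic_add_div f Q
    have h2 : ν (f /ₘ Q) + ν Q = ν (f - f %ₘ Q) := by
      rw [← hν.2.1, this]
    rw [h2]
    calc ν f ≤ min (ν f) (ν (f %ₘ Q)) := le_min le_rfl hmod
      _ = min (ν f) (ν (-(f %ₘ Q))) := by rw [hν.neg]
      _ ≤ ν (f + -(f %ₘ Q)) := hν.2.2.1 _ _
      _ = ν (f - f %ₘ Q) := by rw [← sub_eq_add_neg]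

lemma add_mul_mod_div (hQ : Q.Monic) (x y : K[X]) :
    (x + Q * y) %ₘ Q = x %ₘ Q ∧ (x + Q * y) /ₘ Q = x /ₘ Q + y := by
  have h := div_modByMonic_unique (f := x + Q * y) (x /ₘ Q + y) (x %ₘ Q) hQ
    ⟨by linear_combination modByMonic_add_div x Q, degree_modByMonic_lt x hQ⟩
  exact ⟨h.2, h.1⟩

lemma augVal_mul_Q (hν : IsValuation ν) (hQ : Q.Monic) (hQd : 0 < Q.natDegree) (g : K[X]) :
    augVal ν Q γ (Q * g) = γ + augVal ν Q γ g := by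
  have h := add_mul_mod_div (Q := Q) hQ 0 g
  have h1 : (Q * g) %ₘ Q = 0 := by simpa using h.1
  have h2 : (Q * g) /ₘ Q = g := by simpa using h.2
  rw [augVal_rec hν hQ hQd (Q * g), h1, h2, hν.1]
  exact min_eq_right le_top

lemma augVal_mul_left (hν : IsValuation ν) (hQ : Q.Monic) (hQd : 0 < Q.natDegree)
    (hmin : ∀ c : K[X], c ≠ 0 → c.natDegree < Q.natDegree → ¬ VDvd ν Q c)
    (hγ : ν Q ≤ γ) {a : K[X]} (ha : a.degree < Q.degree) (g : K[X]) :
    ν a + augVal ν Q γ g ≤ augVal ν Q γ (a * g) := by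
  by_cases ha0 : a = 0
  · rw [ha0, zero_mul, augVal_zero hν]
    exact le_top
  have key : ∀ (n : ℕ) (g : K[X]), g.natDegree ≤ n →
      ν a + augVal ν Q γ g ≤ augVal ν Q γ (a * g) := by
    intro n
    induction n using Nat.strong_induction_on with
    | _ n ih =>
      intro g hgn
      by_cases hg0 : g = 0
      · rw [hg0, mul_zero, augVal_zero hν]
        exact le_top
      set g0 := g %ₘ Q with hg0def
      set g1 := g /ₘ Q with hg1def
      have hgsplit : a * g = a * g0 + Q * (a * g1) := by
        have := modByMonic_add_div g Q
        linear_combination a * this.symm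
      have hmod : (a * g) %ₘ Q = (a * g0) %ₘ Q := by
        rw [hgsplit]; exact (add_mul_mod_div hQ _ _).1
      have hdiv : (a * g) /ₘ Q = (a * g0) /ₘ Q + a * g1 := by
        rw [hgsplit]; exact (add_mul_mod_div hQ _ _).2
      have hrecg : augVal ν Q γ g = min (ν g0) (γ + augVal ν Q γ g1) :=
        augVal_rec hν hQ hQd g
      -- branch 1 : the remainder term
      have hb1 : ν a + augVal ν Q γ g ≤ ν ((a * g) %ₘ Q) := by
        rw [hmod]
        calc ν a + augVal ν Q γ g ≤ ν a + ν g0 :=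
              add_le_add_right (hrecg ▸ min_le_left _ _) _
          _ = ν (a * g0) := (hν.2.1 a g0).symm
          _ ≤ ν ((a * g0) %ₘ Q) := (fact_mod_div hν hQ hmin _).1
      -- branch 2a : the quotient of the low-degree product
      have hb2a : ν a + augVal ν Q γ g ≤ γ + augVal ν Q γ ((a * g0) /ₘ Q) := by
        by_cases hw0 : (a * g0) /ₘ Q = 0
        · rw [hw0, augVal_zero hν, add_top]
          exact le_top
        have hg00 : g0 ≠ 0 := by
          intro h
          rw [h, mul_zero, zero_divByMonic] at hw0
          exact hw0 rfl
        have hwdeg : ((a * g0) /ₘ Q).degree < Q.degree := by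
          apply degree_lt_degree_of_natDegree_lt hQ
          have h1 : (a * g0).natDegree ≤ a.natDegree + g0.natDegree := natDegree_mul_le
          have h2 : a.natDegree < Q.natDegree := natDegree_lt_natDegree ha0 ha
          have h3 : g0.natDegree < Q.natDegree :=
            natDegree_lt_natDegree hg00 (degree_modByMonic_lt g hQ)
          have h4 : ((a * g0) /ₘ Q).natDegree = (a * g0).natDegree - Q.natDegree :=
            natDegree_divByMonic _ hQ
          omega
        rw [augVal_deg_lt hν hQ hQd hwdeg]
        calc ν a + augVal ν Q γ g ≤ ν a + ν g0 :=
              add_le_add_right (hrecg ▸ min_le_left _ _) _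
          _ = ν (a * g0) := (hν.2.1 a g0).symm
          _ ≤ ν ((a * g0) /ₘ Q) + ν Q := (fact_mod_div hν hQ hmin _).2
          _ = ν Q + ν ((a * g0) /ₘ Q) := add_comm _ _
          _ ≤ γ + ν ((a * g0) /ₘ Q) := add_le_add_left hγ _
      -- branch 2b : the recursive product term
      have hb2b : ν a + augVal ν Q γ g ≤ γ + augVal ν Q γ (a * g1) := by
        by_cases hg10 : g1 = 0
        · rw [hg10, mul_zero, augVal_zero hν, add_top]
          exact le_top
        have hlt : g1.natDegree < g.natDegree := by
          apply natDegree_lt_natDegree hg10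
          exact degree_divByMonic_lt g Q hg0
            (by rw [← natDegree_pos_iff_degree_pos]; exact hQd)
        have hIH : ν a + augVal ν Q γ g1 ≤ augVal ν Q γ (a * g1) :=
          ih g1.natDegree (by omega) g1 le_rfl
        calc ν a + augVal ν Q γ g ≤ ν a + (γ + augVal ν Q γ g1) :=
              add_le_add_right (hrecg ▸ min_le_right _ _) _
          _ = γ + (ν a + augVal ν Q γ g1) := by
              rw [← add_assoc, add_comm (ν a) γ, add_assoc]
          _ ≤ γ + augVal ν Q γ (a * g1) := add_le_add_right hIH _
      rw [augVal_rec hν hQ hQd (a * g), hdiv]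
      refine le_min hb1 ?_
      calc ν a + augVal ν Q γ g
          ≤ min (γ + augVal ν Q γ ((a * g0) /ₘ Q)) (γ + augVal ν Q γ (a * g1)) :=
            le_min hb2a hb2b
        _ = γ + min (augVal ν Q γ ((a * g0) /ₘ Q)) (augVal ν Q γ (a * g1)) :=
            wt_min_add_left _ _ _
        _ ≤ γ + augVal ν Q γ ((a * g0) /ₘ Q + a * g1) :=
            add_le_add_right (augVal_add hν hQ hQd _ _) _
  exact key g.natDegree g le_rfl

end AugVal



end Stmt15Helpers


section Transfer
variable {ν : K[X] → WithTop Λ} {Q Q' : K[X]} {γ : WithTop Λ}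

lemma augVal_mul_Qmk (hν : IsValuation ν) (hQ : Q.Monic) (hQd : 0 < Q.natDegree)
    (hmin : ∀ c : K[X], c ≠ 0 → c.natDegree < Q.natDegree → ¬ VDvd ν Q c)
    (hQ'm : Q'.Monic) (hdegQ : Q'.degree = Q.degree)
    (hγ : ν Q ≤ γ) (hh : γ < ν (Q' - Q)) (x : K[X]) :
    γ + augVal ν Q γ x ≤ augVal ν Q γ (Q' * x) := by
  have hsplit : Q' * x = Q * x + (Q' - Q) * x := by ring
  rw [hsplit]
  refine le_trans (le_min ?_ ?_) (augVal_add hν hQ hQd _ _)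
  · rw [augVal_mul_Q hν hQ hQd x]
  · have hdlt : (Q' - Q).degree < Q.degree := by
      rw [← hdegQ]
      exact degree_sub_lt hdegQ hQ'm.ne_zero (by rw [hQ'm.leadingCoeff, hQ.leadingCoeff])
    calc γ + augVal ν Q γ x ≤ ν (Q' - Q) + augVal ν Q γ x :=
          add_le_add_left hh.le _
      _ ≤ augVal ν Q γ ((Q' - Q) * x) := augVal_mul_left hν hQ hQd hmin hγ hdlt x

lemma augVal_pow_mul_h (hν : IsValuation ν) (hQ : Q.Monic) (hQd : 0 < Q.natDegree)
    (hmin : ∀ c : K[X], c ≠ 0 → c.natDegree < Q.natDegree → ¬ VDvd ν Q c)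
    (hQ'm : Q'.Monic) (hdegQ : Q'.degree = Q.degree)
    (hγ : ν Q ≤ γ) (hh : γ < ν (Q' - Q)) (k : ℕ) :
    k • γ + ν (Q' - Q) ≤ augVal ν Q γ (Q' ^ k * (Q' - Q)) := by
  have hdlt : (Q' - Q).degree < Q.degree := by
    rw [← hdegQ]
    exact degree_sub_lt hdegQ hQ'm.ne_zero (by rw [hQ'm.leadingCoeff, hQ.leadingCoeff])
  induction k with
  | zero =>
    rw [pow_zero, one_mul, zero_nsmul, zero_add, augVal_deg_lt hν hQ hQd hdlt]
  | succ k ih =>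
    have : Q' ^ (k + 1) * (Q' - Q) = Q' * (Q' ^ k * (Q' - Q)) := by ring
    rw [this]
    calc (k + 1) • γ + ν (Q' - Q) = γ + (k • γ + ν (Q' - Q)) := by
          rw [succ_nsmul, add_comm (k • γ) γ, add_assoc]
      _ ≤ γ + augVal ν Q γ (Q' ^ k * (Q' - Q)) := add_le_add_right ih _
      _ ≤ augVal ν Q γ (Q' * (Q' ^ k * (Q' - Q))) :=
          augVal_mul_Qmk hν hQ hQd hmin hQ'm hdegQ hγ hh _

lemma augVal_pow_diff (hν : IsValuation ν) (hQ : Q.Monic) (hQd : 0 < Q.natDegree)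
    (hmin : ∀ c : K[X], c ≠ 0 → c.natDegree < Q.natDegree → ¬ VDvd ν Q c)
    (hQ'm : Q'.Monic) (hdegQ : Q'.degree = Q.degree)
    (hγ : ν Q ≤ γ) (hh : γ < ν (Q' - Q)) (s : ℕ) :
    ν (Q' - Q) + s • γ ≤ augVal ν Q γ (Q' ^ (s + 1) - Q ^ (s + 1)) := by
  induction s with
  | zero =>
    have hdlt : (Q' - Q).degree < Q.degree := by
      rw [← hdegQ]
      exact degree_sub_lt hdegQ hQ'm.ne_zero (by rw [hQ'm.leadingCoeff, hQ.leadingCoeff])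
    rw [pow_one, pow_one, zero_nsmul, add_zero, augVal_deg_lt hν hQ hQd hdlt]
  | succ s ih =>
    have hsplit : Q' ^ (s + 2) - Q ^ (s + 2)
        = (Q' ^ (s + 1) - Q ^ (s + 1)) * Q + Q' ^ (s + 1) * (Q' - Q) := by ring
    rw [hsplit]
    refine le_trans (le_min ?_ ?_) (augVal_add hν hQ hQd _ _)
    · rw [mul_comm, augVal_mul_Q hν hQ hQd]
      calc ν (Q' - Q) + (s + 1) • γ = γ + (ν (Q' - Q) + s • γ) := by
            rw [succ_nsmul, ← add_assoc, add_comm _ γ]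
        _ ≤ γ + augVal ν Q γ (Q' ^ (s + 1) - Q ^ (s + 1)) := add_le_add_right ih _
    · calc ν (Q' - Q) + (s + 1) • γ = (s + 1) • γ + ν (Q' - Q) := add_comm _ _
        _ ≤ augVal ν Q γ (Q' ^ (s + 1) * (Q' - Q)) :=
          augVal_pow_mul_h hν hQ hQd hmin hQ'm hdegQ hγ hh _

/-- The transfer lemma: expansions with respect to `Q` and `Q' = Q + h`, `ν h > γ ≥ ν Q`,
have the same truncated value and the same attainment sets. -/
lemma transfer (hν : IsValuation ν) (hQ : Q.Monic) (hQd : 0 < Q.natDegree)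
    (hmin : ∀ c : K[X], c ≠ 0 → c.natDegree < Q.natDegree → ¬ VDvd ν Q c)
    (hQ'm : Q'.Monic) (hdeg : Q'.natDegree = Q.natDegree)
    (hγ : ν Q ≤ γ) (hγtop : γ ≠ ⊤) (hh : γ < ν (Q' - Q))
    (f : K[X]) (hfin : augVal ν Q' γ f ≠ ⊤) :
    augVal ν Q γ f = augVal ν Q' γ f ∧
      ∀ s : ℕ, (ν (qCoeff Q f s) + s • γ = augVal ν Q' γ f
        ↔ ν (qCoeff Q' f s) + s • γ = augVal ν Q' γ f) := by
  have hQ'd : 0 < Q'.natDegree := by omega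
  have hdegQ : Q'.degree = Q.degree := by
    rw [degree_eq_natDegree hQ'm.ne_zero, degree_eq_natDegree hQ.ne_zero]
    exact_mod_cast hdeg
  set N := f.natDegree + 1 with hN
  set V := augVal ν Q' γ f with hV
  set a' : ℕ → K[X] := fun s => qCoeff Q' f s with ha'
  have hdegs : ∀ u, (a' u).degree < Q.degree := fun u => hdegQ ▸ qCoeff_degree_lt hQ'm f u
  set f₀ : K[X] := ∑ s ∈ Finset.range N, a' s * Q ^ s with hf₀
  have hexp : f = ∑ s ∈ Finset.range N, a' s * Q' ^ s := (qCoeff_sum hQ'm hQ'd f).symm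
  have hR : f - f₀ = ∑ s ∈ Finset.range N, a' s * (Q' ^ s - Q ^ s) := by
    rw [hf₀]
    nth_rewrite 1 [hexp]
    rw [← Finset.sum_sub_distrib]
    exact Finset.sum_congr rfl fun s _ => by ring
  -- the correction term has large value
  have hRbig : V < augVal ν Q γ (f - f₀) := by
    rw [hR]
    refine augVal_sum_lt hν hQ hQd hfin _ _ fun s _ => ?_
    cases s with
    | zero => simpa [augVal_zero hν] using hfin.lt_top
    | succ s =>
      by_cases hatop : ν (a' (s + 1)) = ⊤
      · refine lt_of_lt_of_le hfin.lt_top (le_trans (le_of_eq ?_)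
          (augVal_mul_left hν hQ hQd hmin hγ (hdegs (s + 1)) _))
        rw [hatop, top_add]
      calc V ≤ ν (a' (s + 1)) + (s + 1) • γ := augVal_le_term hν hQ'm hQ'd f (s + 1)
        _ < ν (a' (s + 1)) + (ν (Q' - Q) + s • γ) := by
            apply WithTop.add_lt_add_left hatop
            rw [succ_nsmul, add_comm (s • γ) γ]
            exact (WithTop.add_lt_add_iff_right (wt_nsmul_ne_top hγtop s)).mpr hh
        _ ≤ ν (a' (s + 1)) + augVal ν Q γ (Q' ^ (s + 1) - Q ^ (s + 1)) :=
            add_le_add_right (augVal_pow_diff hν hQ hQd hmin hQ'm hdegQ hγ hh s) _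
        _ ≤ augVal ν Q γ (a' (s + 1) * (Q' ^ (s + 1) - Q ^ (s + 1))) :=
            augVal_mul_left hν hQ hQd hmin hγ (hdegs (s + 1)) _
  -- coefficient comparison
  have hcoeff : ∀ s, qCoeff Q f s = a' s + qCoeff Q (f - f₀) s := by
    intro s
    have h1 : qCoeff Q f₀ s = a' s := by
      rw [hf₀, qCoeff_of_sum hQ a' hdegs s N]
      by_cases hs : s < N
      · rw [if_pos hs]
      · rw [if_neg hs]
        have : f.natDegree < s := by omega
        exact (qCoeff_eq_zero hQ'm hQ'd this).symm
    have h2 : f₀ + (f - f₀) = f := by ring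
    rw [← h1, ← qCoeff_add hQ, h2]
  have hterm : ∀ s, V ≤ ν (qCoeff Q f s) + s • γ
      ∧ (ν (qCoeff Q f s) + s • γ = V ↔ ν (a' s) + s • γ = V) := by
    intro s
    have hterm_a : V ≤ ν (a' s) + s • γ := augVal_le_term hν hQ'm hQ'd f s
    have hterm_R : V < ν (qCoeff Q (f - f₀) s) + s • γ :=
      lt_of_lt_of_le hRbig (augVal_le_term hν hQ hQd (f - f₀) s)
    rcases eq_or_lt_of_le hterm_a with hA | hA
    · have hlt : ν (a' s) < ν (qCoeff Q (f - f₀) s) := by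
        rw [← WithTop.add_lt_add_iff_right (wt_nsmul_ne_top hγtop s)]
        rw [hA] at hterm_R
        exact hterm_R
      have : ν (qCoeff Q f s) = ν (a' s) := by
        rw [hcoeff s]
        exact hν.add_eq_left hlt
      rw [this]
      exact ⟨le_of_eq hA, by tauto⟩
    · have hmin' : V < min (ν (a' s)) (ν (qCoeff Q (f - f₀) s)) + s • γ := by
        rw [← wt_min_add]
        exact lt_min hA hterm_R
      have hge : V < ν (qCoeff Q f s) + s • γ := by
        refine lt_of_lt_of_le hmin' (add_le_add_left ?_ _)
        rw [hcoeff s]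
        exact hν.2.2.1 _ _
      exact ⟨hge.le, ⟨fun h => absurd h.symm (ne_of_lt hge), fun h => absurd h.symm (ne_of_lt hA)⟩⟩
  -- conclude
  have hQval : augVal ν Q γ f = V := by
    refine le_antisymm ?_ ?_
    · obtain ⟨s0, hs0mem, hs0⟩ := Finset.exists_mem_eq_inf (Finset.range N)
        (by simp [hN]) (fun s => ν (a' s) + s • γ)
      have hVs0 : ν (a' s0) + s0 • γ = V := by rw [hV, augVal_def]; exact hs0.symm
      have := (hterm s0).2.mpr hVs0
      calc augVal ν Q γ f ≤ ν (qCoeff Q f s0) + s0 • γ := augVal_le_term hν hQ hQd f s0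
        _ = V := this
    · rw [augVal_def]
      exact Finset.le_inf fun s _ => (hterm s).1
  exact ⟨hQval, fun s => (hterm s).2⟩

end Transfer


section Chain
variable (ch : MacLaneChain K Λ)

lemma chain_le {k l : ℕ} (h : k ≤ l) (f : K[X]) : ch.ρ k f ≤ ch.ρ l f := by
  induction l, h using Nat.le_induction with
  | base => exact le_rfl
  | succ l hkl ih => exact le_trans ih ((ch.mono l).1 f)

lemma chain_chi_degW (k : ℕ) : (ch.χ (k + 1)).degree = (ch.m : WithBot ℕ) := by
  rw [degree_eq_natDegree (ch.monicChi k).ne_zero, ch.degChi k]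

lemma chain_chi_ndpos (k : ℕ) : 0 < (ch.χ (k + 1)).natDegree := by
  rw [ch.degChi k]; exact ch.hm

lemma chain_stable_step (k : ℕ) {f : K[X]} (hf : f.degree < (ch.m : WithBot ℕ)) :
    ch.ρ (k + 1) f = ch.ρ k f := by
  rw [ch.aug k]
  exact augVal_deg_lt (ch.isVal k) (ch.monicChi k) (chain_chi_ndpos ch k)
    (by rw [chain_chi_degW]; exact hf)

lemma chain_stable {f : K[X]} (hf : f.degree < (ch.m : WithBot ℕ)) (k l : ℕ) :
    ch.ρ k f = ch.ρ l f := by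
  have key : ∀ n, ch.ρ n f = ch.ρ 0 f := by
    intro n
    induction n with
    | zero => rfl
    | succ n ih => rw [chain_stable_step ch n hf, ih]
  rw [key k, key l]

lemma chain_sub_deg {k l : ℕ} (hk : 1 ≤ k) (hl : 1 ≤ l) :
    (ch.χ k - ch.χ l).degree < (ch.m : WithBot ℕ) := by
  obtain ⟨k, rfl⟩ : ∃ n, k = n + 1 := ⟨k - 1, by omega⟩
  obtain ⟨l, rfl⟩ : ∃ n, l = n + 1 := ⟨l - 1, by omega⟩
  have hdd : (ch.χ (k + 1)).degree = (ch.χ (l + 1)).degree := by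
    rw [chain_chi_degW ch k, chain_chi_degW ch l]
  have hlc : (ch.χ (k + 1)).leadingCoeff = (ch.χ (l + 1)).leadingCoeff := by
    rw [(ch.monicChi k).leadingCoeff, (ch.monicChi l).leadingCoeff]
  have h := degree_sub_lt hdd (ch.monicChi k).ne_zero hlc
  rwa [chain_chi_degW ch k] at h

lemma chain_d (k : ℕ) :
    ch.ρ (k + 1) (ch.χ (k + 2) - ch.χ (k + 1)) = (ch.β (k + 1) : WithTop Λ) := by
  have hβ1 : ch.ρ (k + 1) (ch.χ (k + 1)) = (ch.β (k + 1) : WithTop Λ) := ch.beta_def k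
  have hub : ch.ρ (k + 1) (ch.χ (k + 2) - ch.χ (k + 1)) ≤ (ch.β (k + 1) : WithTop Λ) := by
    have hnd := ch.not_dvd k
    unfold VDvd VEquiv at hnd
    push_neg at hnd
    have h1 := hnd 1
    rw [one_mul, hβ1] at h1
    have heq : ch.ρ (k + 1) (ch.χ (k + 1) - ch.χ (k + 2))
        = ch.ρ (k + 1) (ch.χ (k + 2) - ch.χ (k + 1)) := (ch.isVal (k + 1)).sub_comm _ _
    rw [heq] at h1
    exact h1
  refine le_antisymm hub ?_
  by_contra hlt
  push_neg at hlt
  set d := ch.ρ (k + 1) (ch.χ (k + 2) - ch.χ (k + 1)) with hd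
  have hval : ch.ρ (k + 1) (ch.χ (k + 2)) = d := by
    have heq : ch.χ (k + 2) = (ch.χ (k + 2) - ch.χ (k + 1)) + ch.χ (k + 1) := by ring
    rw [heq]
    exact (ch.isVal (k + 1)).add_eq_left (by rw [hβ1]; exact hlt)
  have h4 : d < (ch.β (k + 2) : WithTop Λ) := by
    have := ch.beta_lt (k + 1)
    rwa [hval] at this
  have h1 : (ch.β (k + 1) : WithTop Λ) ≤ ch.ρ (k + 2) (ch.χ (k + 1)) := by
    rw [← hβ1]; exact chain_le ch (by omega) _
  have h2 : ch.ρ (k + 2) (ch.χ (k + 2)) = (ch.β (k + 2) : WithTop Λ) := ch.beta_def (k + 1)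
  have h3 : ch.ρ (k + 2) (ch.χ (k + 2) - ch.χ (k + 1)) = d := by
    rw [hd]
    exact chain_stable ch (chain_sub_deg ch (by omega) (by omega)) _ _
  have hmin : min (ch.ρ (k + 2) (ch.χ (k + 2))) (ch.ρ (k + 2) (-(ch.χ (k + 1))))
      ≤ ch.ρ (k + 2) (ch.χ (k + 2) - ch.χ (k + 1)) := by
    have := (ch.isVal (k + 2)).2.2.1 (ch.χ (k + 2)) (-(ch.χ (k + 1)))
    rwa [← sub_eq_add_neg] at this
  rw [(ch.isVal (k + 2)).neg, h2, h3] at hmin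
  have : d < min ((ch.β (k + 2) : WithTop Λ)) (ch.ρ (k + 2) (ch.χ (k + 1))) :=
    lt_min h4 (lt_of_lt_of_le hlt h1)
  exact absurd hmin (not_le.mpr this)

lemma chain_beta_step (k : ℕ) : ch.β (k + 1) < ch.β (k + 2) := by
  have hlow : (ch.β (k + 1) : WithTop Λ) ≤ ch.ρ (k + 1) (ch.χ (k + 2)) := by
    have heq : ch.χ (k + 2) = (ch.χ (k + 2) - ch.χ (k + 1)) + ch.χ (k + 1) := by ring
    rw [heq]
    refine le_trans ?_ ((ch.isVal (k + 1)).2.2.1 _ _)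
    rw [chain_d ch k, ch.beta_def k]
    simp
  have := lt_of_le_of_lt hlow (ch.beta_lt (k + 1))
  exact_mod_cast this

lemma chain_beta_mono {k l : ℕ} (hk : 1 ≤ k) (hkl : k < l) : ch.β k < ch.β l := by
  obtain ⟨k, rfl⟩ : ∃ n, k = n + 1 := ⟨k - 1, by omega⟩
  induction l, hkl using Nat.le_induction with
  | base => exact chain_beta_step ch k
  | succ l hkl ih =>
    obtain ⟨l, rfl⟩ : ∃ n, l = n + 1 := ⟨l - 1, by omega⟩
    exact lt_trans ih (chain_beta_step ch l)

lemma chain_diff {i j : ℕ} (hi : 1 ≤ i) (hij : i < j) (l : ℕ) :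
    ch.ρ l (ch.χ j - ch.χ i) = (ch.β i : WithTop Λ) := by
  have key : ch.ρ i (ch.χ j - ch.χ i) = (ch.β i : WithTop Λ) := by
    induction j with
    | zero => omega
    | succ j ih =>
      rcases Nat.lt_or_ge i j with hij' | hij'
      · have hstep : ch.ρ i (ch.χ (j + 1) - ch.χ j) = (ch.β j : WithTop Λ) := by
          obtain ⟨n, rfl⟩ : ∃ n, j = n + 1 := ⟨j - 1, by omega⟩
          rw [← chain_d ch n]
          exact chain_stable ch (chain_sub_deg ch (by omega) (by omega)) _ _
        have heq : ch.χ (j + 1) - ch.χ i = (ch.χ j - ch.χ i) + (ch.χ (j + 1) - ch.χ j) := by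
          ring
        rw [heq]
        rw [(ch.isVal i).add_eq_left]
        · exact ih hij'
        · rw [ih hij', hstep]
          exact_mod_cast chain_beta_mono ch hi hij'
      · have : i = j := by omega
        subst this
        obtain ⟨n, rfl⟩ : ∃ n, i = n + 1 := ⟨i - 1, by omega⟩
        exact chain_d ch n
  rw [← key]
  exact chain_stable ch (chain_sub_deg ch (by omega) hi) _ _

lemma chain_chi_val {i j : ℕ} (hi : 1 ≤ i) (hij : i < j) :
    ch.ρ i (ch.χ j) = (ch.β i : WithTop Λ) := by
  obtain ⟨k, rfl⟩ : ∃ n, i = n + 1 := ⟨i - 1, by omega⟩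
  have hdm := div_modByMonic_unique (f := ch.χ j) 1 (ch.χ j - ch.χ (k + 1)) (ch.monicChi k)
    ⟨by ring, by rw [chain_chi_degW ch k]; exact chain_sub_deg ch (by omega) (by omega)⟩
  rw [ch.aug k]
  rw [augVal_rec (ch.isVal k) (ch.monicChi k) (chain_chi_ndpos ch k) (ch.χ j)]
  rw [hdm.2, hdm.1]
  rw [chain_diff ch (by omega) hij k]
  rw [augVal_deg_lt (ch.isVal k) (ch.monicChi k) (chain_chi_ndpos ch k)
    (by rw [degree_one, chain_chi_degW ch k]; exact_mod_cast ch.hm)]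
  rw [(ch.isVal k).one, add_zero, min_self]

lemma chain_term_val {i j : ℕ} (hi : 1 ≤ i) (hij : i < j) (a : K[X]) (s : ℕ) :
    ch.ρ i (a * ch.χ j ^ s) = ch.ρ i a + s • (ch.β i : WithTop Λ) := by
  rw [(ch.isVal i).2.1, (ch.isVal i).pow, chain_chi_val ch hi hij]

end Chain


section LambdaArith

lemma nsmul_mono {a b : Λ} (h : a ≤ b) (n : ℕ) : n • a ≤ n • b := by
  induction n with
  | zero => simp
  | succ n ih => rw [succ_nsmul, succ_nsmul]; exact add_le_add ih h

lemma nsmul_strict {a b : Λ} (h : a < b) {n : ℕ} (hn : 0 < n) : n • a < n • b := by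
  obtain ⟨n, rfl⟩ : ∃ m, n = m + 1 := ⟨n - 1, by omega⟩
  rw [succ_nsmul, succ_nsmul]
  exact add_lt_add_of_le_of_lt (nsmul_mono h.le n) h

lemma nsmul_pos' {a : Λ} (h : 0 < a) {n : ℕ} (hn : 0 < n) : 0 < n • a := by
  have := nsmul_strict (Λ := Λ) h hn
  rwa [smul_zero] at this

lemma nsmul_sub' (n : ℕ) (a b : Λ) : n • (a - b) = n • a - n • b := by
  induction n with
  | zero => simp
  | succ n ih => rw [succ_nsmul, succ_nsmul, succ_nsmul, ih]; abel

variable [Module ℚ Λ]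

/-- Division by `2 n` in a divisible group: a positive element admits a scaled version whose
`n`-fold sum is still smaller. -/
lemma half_smul (n : ℕ) (hn : 0 < n) {x : Λ} (hx : 0 < x) :
    0 < (((2 * n : ℕ) : ℚ))⁻¹ • x ∧ n • ((((2 * n : ℕ) : ℚ))⁻¹ • x) < x := by
  set y := (((2 * n : ℕ) : ℚ))⁻¹ • x with hy
  have h2n : ((2 * n : ℕ) : ℚ) ≠ 0 := by positivity
  have hxy : (2 * n) • y = x := by
    rw [hy, ← Nat.cast_smul_eq_nsmul ℚ (2 * n), smul_inv_smul₀ h2n]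
  have hypos : 0 < y := by
    by_contra hle
    push_neg at hle
    have : (2 * n) • y ≤ (2 * n) • (0 : Λ) := nsmul_mono hle _
    rw [smul_zero, hxy] at this
    exact absurd this (not_le.mpr hx)
  refine ⟨hypos, ?_⟩
  have : (2 * n) • y = n • y + n • y := by
    rw [two_mul, add_nsmul]
  rw [← hxy, this]
  exact lt_add_of_pos_right _ (nsmul_pos' hypos hn)

end LambdaArith


section MainAux

lemma wt_coe_term (u β : Λ) (s : ℕ) :
    (u : WithTop Λ) + s • (β : WithTop Λ) = ((u + s • β : Λ) : WithTop Λ) := by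
  rw [← wt_coe_nsmul, WithTop.coe_add]

lemma nsmul_mono_nat {δ : Λ} (hδ : 0 ≤ δ) {t s : ℕ} (h : t ≤ s) : t • δ ≤ s • δ := by
  obtain ⟨p, rfl⟩ : ∃ p, s = t + p := ⟨s - t, by omega⟩
  rw [add_nsmul]
  refine le_add_of_nonneg_right ?_
  have := nsmul_mono hδ p
  rwa [smul_zero] at this

lemma lambda_lt_aux {u w βs βb : Λ} {s t : ℕ} (hst : s < t) (hβ : βs < βb)
    (h : w + t • βb ≤ u + s • βb) : w + t • βs < u + s • βs := by
  obtain ⟨p, rfl⟩ : ∃ p, t = s + (p + 1) := ⟨t - s - 1, by omega⟩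
  rw [add_nsmul] at h ⊢
  have h2 : w + (p + 1) • βb ≤ u := by
    have h' : (w + (p + 1) • βb) + s • βb ≤ u + s • βb := by
      calc (w + (p + 1) • βb) + s • βb = w + (s • βb + (p + 1) • βb) := by abel
        _ ≤ u + s • βb := h
    exact le_of_add_le_add_right h'
  calc w + (s • βs + (p + 1) • βs) = (w + (p + 1) • βs) + s • βs := by abel
    _ < (w + (p + 1) • βb) + s • βs :=
        add_lt_add_left (add_lt_add_right (nsmul_strict hβ (by omega)) w) _
    _ ≤ u + s • βs := add_le_add_left h2 _

lemma lambda_lift_aux {u w δ β1 : Λ} {s t : ℕ} (hts : t < s) (hδ : 0 < δ)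
    (h : w + t • (β1 - δ) < u + s • (β1 - δ)) : w + t • β1 < u + s • β1 := by
  have h1 : w + t • β1 = (w + t • (β1 - δ)) + t • δ := by rw [nsmul_sub']; abel
  have h2 : u + s • β1 = (u + s • (β1 - δ)) + s • δ := by rw [nsmul_sub']; abel
  rw [h1, h2]
  exact add_lt_add_of_lt_of_le h (nsmul_mono_nat hδ.le hts.le)

lemma lambda_pos_aux {u w β1 : Λ} {s t : ℕ} (hts : t < s)
    (h : w + t • β1 < u + s • β1) : 0 < u + (s - t) • β1 - w := by
  obtain ⟨p, rfl⟩ : ∃ p, s = t + (p + 1) := ⟨s - t - 1, by omega⟩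
  have hst : t + (p + 1) - t = p + 1 := by omega
  rw [hst]
  rw [add_nsmul] at h
  have : w < u + (p + 1) • β1 := by
    have h' : w + t • β1 < (u + (p + 1) • β1) + t • β1 := by
      calc w + t • β1 < u + (t • β1 + (p + 1) • β1) := h
        _ = (u + (p + 1) • β1) + t • β1 := by abel
    exact lt_of_add_lt_add_right h'
  exact sub_pos.mpr this

lemma lambda_argmin_aux {u w δ β1 : Λ} {s t : ℕ} (hts : t < s)
    (hδ : (s - t) • δ < u + (s - t) • β1 - w) :
    w + t • (β1 - δ) < u + s • (β1 - δ) := by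
  obtain ⟨p, rfl⟩ : ∃ p, s = t + (p + 1) := ⟨s - t - 1, by omega⟩
  have hst : t + (p + 1) - t = p + 1 := by omega
  rw [hst] at hδ
  have h2 : (p + 1) • δ + w < u + (p + 1) • β1 := by
    have := add_lt_add_left hδ w
    rwa [sub_add_cancel] at this
  have h3 : w < u + ((p + 1) • β1 - (p + 1) • δ) := by
    have h4 := sub_lt_sub_right h2 ((p + 1) • δ)
    calc w = (p + 1) • δ + w - (p + 1) • δ := by abel
      _ < u + (p + 1) • β1 - (p + 1) • δ := h4
      _ = u + ((p + 1) • β1 - (p + 1) • δ) := by abel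
  calc w + t • (β1 - δ) < (u + ((p + 1) • β1 - (p + 1) • δ)) + t • (β1 - δ) :=
        add_lt_add_left h3 _
    _ = u + (t + (p + 1)) • (β1 - δ) := by
        simp only [add_nsmul, nsmul_sub']
        abel

end MainAux

/-- if `t = t_∞(φ)` is stabilized from `i0` on, then for all
`i0 < i < j` one has `φ ∼_{ρ_i} a_{t,j} χ_j^t`. -/
theorem stmt15 (ch : MacLaneChain K Λ) (hess : ch.Essential)
    (φ : K[X]) (hφ : ch.IsLimKP φ) (t i0 : ℕ) (hi0 : 1 ≤ i0)
    (ht : ∀ i : ℕ, i0 ≤ i → IsGreatest (attain (ch.ρ i) (ch.χ i) φ) t) :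
    ∀ i j : ℕ, i0 < i → i < j →
      VEquiv (ch.ρ i) φ (qCoeff (ch.χ j) φ t * ch.χ j ^ t) := by
  intro i j hii hij
  obtain ⟨k, rfl⟩ : ∃ k, i = k + 1 := ⟨i - 1, by omega⟩
  obtain ⟨l, rfl⟩ : ∃ l, j = l + 1 := ⟨j - 1, by omega⟩
  have hk1 : 1 ≤ k := by omega
  have hkl : k + 1 < l + 1 := hij
  -- notation
  set β1 : Λ := ch.β (k + 1) with hβ1def
  have hνk := ch.isVal k
  have hνk1 := ch.isVal (k + 1)
  have hνj := ch.isVal (l + 1)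
  have hQm := ch.monicChi k
  have hQnd := chain_chi_ndpos ch k
  have hQ'm := ch.monicChi l
  have hQ'nd := chain_chi_ndpos ch l
  have hmin := (ch.keyChi k).2.1
  set N := φ.natDegree + 1 with hN
  -- coefficient degrees & stability
  have hadeg : ∀ s, (qCoeff (ch.χ (l + 1)) φ s).degree < (ch.m : WithBot ℕ) := fun s => by
    rw [← chain_chi_degW ch l]; exact qCoeff_degree_lt hQ'm φ s
  have hbdeg : ∀ s, (qCoeff (ch.χ (k + 1)) φ s).degree < (ch.m : WithBot ℕ) := fun s => by
    rw [← chain_chi_degW ch k]; exact qCoeff_degree_lt hQm φ s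
  ------------------------------------------------------------------
  -- Level-(l+1) data (the χ_j-expansion at the top level)
  ------------------------------------------------------------------
  have htj := ht (l + 1) (by omega)
  have htermj : ∀ s, ch.ρ (l + 1) (qCoeff (ch.χ (l + 1)) φ s * ch.χ (l + 1) ^ s)
      = ch.ρ k (qCoeff (ch.χ (l + 1)) φ s) + s • (ch.β (l + 1) : WithTop Λ) := by
    intro s
    rw [hνj.2.1, hνj.pow, ch.beta_def l, chain_stable ch (hadeg s) (l + 1) k]
  have hMj_t : ch.ρ k (qCoeff (ch.χ (l + 1)) φ t) + t • (ch.β (l + 1) : WithTop Λ)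
      = trunc (ch.ρ (l + 1)) (ch.χ (l + 1)) φ := by
    have h1 : ch.ρ (l + 1) (qCoeff (ch.χ (l + 1)) φ t * ch.χ (l + 1) ^ t)
        = trunc (ch.ρ (l + 1)) (ch.χ (l + 1)) φ := htj.1
    rwa [htermj t] at h1
  have hMj_le : ∀ s, trunc (ch.ρ (l + 1)) (ch.χ (l + 1)) φ
      ≤ ch.ρ k (qCoeff (ch.χ (l + 1)) φ s) + s • (ch.β (l + 1) : WithTop Λ) := by
    intro s
    by_cases hs : s < N
    · have h1 : trunc (ch.ρ (l + 1)) (ch.χ (l + 1)) φ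
          ≤ ch.ρ (l + 1) (qCoeff (ch.χ (l + 1)) φ s * ch.χ (l + 1) ^ s) :=
        Finset.inf_le (Finset.mem_range.mpr hs)
      rwa [htermj s] at h1
    · rw [qCoeff_eq_zero hQ'm hQ'nd (by omega), hνk.1, top_add]
      exact le_top
  have hMj_netop : trunc (ch.ρ (l + 1)) (ch.χ (l + 1)) φ ≠ ⊤ := by
    intro htop
    have hmem : (N + t) ∈ attain (ch.ρ (l + 1)) (ch.χ (l + 1)) φ := by
      show ch.ρ (l + 1) (qCoeff (ch.χ (l + 1)) φ (N + t) * ch.χ (l + 1) ^ (N + t))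
        = trunc (ch.ρ (l + 1)) (ch.χ (l + 1)) φ
      rw [qCoeff_eq_zero hQ'm hQ'nd (by omega), zero_mul, hνj.1, htop]
    have := htj.2 hmem
    omega
  have hat_netop : ch.ρ k (qCoeff (ch.χ (l + 1)) φ t) ≠ ⊤ := by
    intro h
    rw [h, top_add] at hMj_t
    exact hMj_netop hMj_t.symm
  have ht_le : t ≤ φ.natDegree := by
    by_contra hc
    push_neg at hc
    rw [qCoeff_eq_zero hQ'm hQ'nd (by omega), hνk.1] at hat_netop
    exact hat_netop rfl
  have hβj : β1 < ch.β (l + 1) := chain_beta_mono ch (by omega) (by omega)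
  ------------------------------------------------------------------
  -- Level-(k+1) diagonal data (the χ_{k+1}-expansion)
  ------------------------------------------------------------------
  have hti := ht (k + 1) (by omega)
  have htermb : ∀ s, ch.ρ (k + 1) (qCoeff (ch.χ (k + 1)) φ s * ch.χ (k + 1) ^ s)
      = ch.ρ k (qCoeff (ch.χ (k + 1)) φ s) + s • (β1 : WithTop Λ) := by
    intro s
    rw [hνk1.2.1, hνk1.pow, ch.beta_def k, chain_stable ch (hbdeg s) (k + 1) k]
  have hM_t : ch.ρ k (qCoeff (ch.χ (k + 1)) φ t) + t • (β1 : WithTop Λ)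
      = trunc (ch.ρ (k + 1)) (ch.χ (k + 1)) φ := by
    have h1 : ch.ρ (k + 1) (qCoeff (ch.χ (k + 1)) φ t * ch.χ (k + 1) ^ t)
        = trunc (ch.ρ (k + 1)) (ch.χ (k + 1)) φ := hti.1
    rwa [htermb t] at h1
  have hM_le : ∀ s, trunc (ch.ρ (k + 1)) (ch.χ (k + 1)) φ
      ≤ ch.ρ k (qCoeff (ch.χ (k + 1)) φ s) + s • (β1 : WithTop Λ) := by
    intro s
    by_cases hs : s < N
    · have h1 : trunc (ch.ρ (k + 1)) (ch.χ (k + 1)) φ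
          ≤ ch.ρ (k + 1) (qCoeff (ch.χ (k + 1)) φ s * ch.χ (k + 1) ^ s) :=
        Finset.inf_le (Finset.mem_range.mpr hs)
      rwa [htermb s] at h1
    · rw [qCoeff_eq_zero hQm hQnd (by omega), hνk.1, top_add]
      exact le_top
  have hM_gt : ∀ s, t < s → trunc (ch.ρ (k + 1)) (ch.χ (k + 1)) φ
      < ch.ρ k (qCoeff (ch.χ (k + 1)) φ s) + s • (β1 : WithTop Λ) := by
    intro s hst
    rcases eq_or_lt_of_le (hM_le s) with he | h
    · exfalso
      have hmem : s ∈ attain (ch.ρ (k + 1)) (ch.χ (k + 1)) φ := by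
        show ch.ρ (k + 1) (qCoeff (ch.χ (k + 1)) φ s * ch.χ (k + 1) ^ s)
          = trunc (ch.ρ (k + 1)) (ch.χ (k + 1)) φ
        rw [htermb s]
        exact he.symm
      have := hti.2 hmem
      omega
    · exact h
  have hM_netop : trunc (ch.ρ (k + 1)) (ch.χ (k + 1)) φ ≠ ⊤ := by
    intro htop
    have hmem : (N + t) ∈ attain (ch.ρ (k + 1)) (ch.χ (k + 1)) φ := by
      show ch.ρ (k + 1) (qCoeff (ch.χ (k + 1)) φ (N + t) * ch.χ (k + 1) ^ (N + t))
        = trunc (ch.ρ (k + 1)) (ch.χ (k + 1)) φ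
      rw [qCoeff_eq_zero hQm hQnd (by omega), zero_mul, hνk1.1, htop]
    have := hti.2 hmem
    omega
  have hbt_netop : ch.ρ k (qCoeff (ch.χ (k + 1)) φ t) ≠ ⊤ := by
    intro h
    rw [h, top_add] at hM_t
    exact hM_netop hM_t.symm
  obtain ⟨w, hw⟩ := WithTop.ne_top_iff_exists.mp hbt_netop
  ------------------------------------------------------------------
  -- the perturbation δ and the value γ = β1 - δ
  ------------------------------------------------------------------
  obtain ⟨c₀, hc₀⟩ := WithTop.ne_top_iff_exists.mp (ne_top_of_lt (ch.beta_lt k))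
  have hc₀lt : c₀ < β1 := by
    have := ch.beta_lt k
    rw [← hc₀] at this
    exact_mod_cast this
  have hδ0pos := (half_smul 1 one_pos (sub_pos.mpr hc₀lt)).1
  have hδ0lt : (1 : ℕ) • ((((2 * 1 : ℕ) : ℚ))⁻¹ • (β1 - c₀)) < β1 - c₀ :=
    (half_smul 1 one_pos (sub_pos.mpr hc₀lt)).2
  rw [one_nsmul] at hδ0lt
  set δ0 : Λ := (((2 * 1 : ℕ) : ℚ))⁻¹ • (β1 - c₀) with hδ0def
  -- the auxiliary function F
  set F : ℕ → Λ := fun s =>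
    if h : t < s ∧ ch.ρ k (qCoeff (ch.χ (k + 1)) φ s) ≠ ⊤ then
      (((2 * (s - t) : ℕ) : ℚ))⁻¹ •
        ((ch.ρ k (qCoeff (ch.χ (k + 1)) φ s)).untop h.2 + (s - t) • β1 - w)
    else δ0 with hFdef
  have hGpos : ∀ s, ∀ h : t < s ∧ ch.ρ k (qCoeff (ch.χ (k + 1)) φ s) ≠ ⊤,
      0 < (ch.ρ k (qCoeff (ch.χ (k + 1)) φ s)).untop h.2 + (s - t) • β1 - w := by
    intro s h
    have hu : ((ch.ρ k (qCoeff (ch.χ (k + 1)) φ s)).untop h.2 : WithTop Λ)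
        = ch.ρ k (qCoeff (ch.χ (k + 1)) φ s) := WithTop.coe_untop _ h.2
    have hgt := hM_gt s h.1
    rw [← hM_t, ← hw, ← hu, wt_coe_term, wt_coe_term, WithTop.coe_lt_coe] at hgt
    exact lambda_pos_aux h.1 hgt
  have hFpos : ∀ s, 0 < F s := by
    intro s
    simp only [hFdef]
    by_cases h : t < s ∧ ch.ρ k (qCoeff (ch.χ (k + 1)) φ s) ≠ ⊤
    · rw [dif_pos h]
      exact (half_smul (s - t) (by omega) (hGpos s h)).1
    · rw [dif_neg h]
      exact hδ0pos
  set δ : Λ := min δ0 ((Finset.range N).inf' ⟨0, by simp [hN]⟩ F) with hδdef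
  have hδpos : 0 < δ := by
    rw [hδdef]
    refine lt_min hδ0pos ?_
    refine (Finset.lt_inf'_iff _).mpr ?_
    exact fun s _ => hFpos s
  have hδle0 : δ ≤ δ0 := min_le_left _ _
  have hδleF : ∀ s ∈ Finset.range N, δ ≤ F s := fun s hs =>
    le_trans (min_le_right _ _) (Finset.inf'_le F hs)
  set γ : WithTop Λ := ((β1 - δ : Λ) : WithTop Λ) with hγdef
  have hγtop : γ ≠ ⊤ := WithTop.coe_ne_top
  have hγltBi : γ < (β1 : WithTop Λ) := by
    rw [hγdef, WithTop.coe_lt_coe]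
    exact sub_lt_self _ hδpos
  have hγQ : ch.ρ k (ch.χ (k + 1)) ≤ γ := by
    rw [← hc₀, hγdef, WithTop.coe_le_coe]
    have h1 : δ < β1 - c₀ := lt_of_le_of_lt hδle0 hδ0lt
    have h2 : δ + c₀ < β1 := lt_sub_iff_add_lt.mp h1
    exact le_of_lt (lt_sub_iff_add_lt.mpr (by rwa [add_comm]))
  ------------------------------------------------------------------
  -- the b-expansion has strict minimum at t for the value γ
  ------------------------------------------------------------------
  have hbargmin : ∀ s, s ≠ t →
      ch.ρ k (qCoeff (ch.χ (k + 1)) φ t) + t • γ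
        < ch.ρ k (qCoeff (ch.χ (k + 1)) φ s) + s • γ := by
    intro s hst
    by_cases hstop : ch.ρ k (qCoeff (ch.χ (k + 1)) φ s) = ⊤
    · rw [hstop, top_add, ← hw, hγdef, wt_coe_term]
      exact WithTop.coe_lt_top _
    obtain ⟨u, hu⟩ := WithTop.ne_top_iff_exists.mp hstop
    rw [← hw, ← hu, hγdef, wt_coe_term, wt_coe_term, WithTop.coe_lt_coe]
    rcases lt_or_gt_of_ne hst with h | h
    -- s < t : use the level-(k+1) inequality at β1 and shrink the multiplier
    · have hle := hM_le s
      rw [← hM_t, ← hw, ← hu, wt_coe_term, wt_coe_term, WithTop.coe_le_coe] at hle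
      exact lambda_lt_aux h (sub_lt_self _ hδpos) hle
    -- s > t : use the choice of δ
    · have hsN : s ∈ Finset.range N := by
        rw [Finset.mem_range]
        by_contra hc
        rw [qCoeff_eq_zero hQm hQnd (by omega), hνk.1] at hstop
        exact hstop rfl
      have hδF := hδleF s hsN
      have hpair : t < s ∧ ch.ρ k (qCoeff (ch.χ (k + 1)) φ s) ≠ ⊤ := ⟨h, hstop⟩
      simp only [hFdef] at hδF
      rw [dif_pos hpair] at hδF
      have huntop : (ch.ρ k (qCoeff (ch.χ (k + 1)) φ s)).untop hpair.2 = u :=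
        WithTop.coe_injective
          ((WithTop.coe_untop (ch.ρ k (qCoeff (ch.χ (k + 1)) φ s)) hpair.2).trans hu.symm)
      rw [huntop] at hδF
      have hγG := (half_smul (s - t) (by omega) (by
        have := hGpos s hpair
        rwa [huntop] at this)).2
      have hsmul : (s - t) • δ < u + (s - t) • β1 - w :=
        lt_of_le_of_lt (nsmul_mono hδF _) hγG
      exact lambda_argmin_aux h hsmul
  ------------------------------------------------------------------
  -- transfer to the χ_j-expansion at the value γ
  ------------------------------------------------------------------
  have hdeg' : (ch.χ (l + 1)).natDegree = (ch.χ (k + 1)).natDegree := by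
    rw [ch.degChi l, ch.degChi k]
  have hγdiff : γ < ch.ρ k (ch.χ (l + 1) - ch.χ (k + 1)) := by
    rw [chain_diff ch (by omega) hkl k]
    exact hγltBi
  have hfin : augVal (ch.ρ k) (ch.χ (l + 1)) γ φ ≠ ⊤ := by
    have h1 : augVal (ch.ρ k) (ch.χ (l + 1)) γ φ
        ≤ ch.ρ k (qCoeff (ch.χ (l + 1)) φ t) + t • γ :=
      augVal_le_term hνk hQ'm hQ'nd φ t
    have h2 : ch.ρ k (qCoeff (ch.χ (l + 1)) φ t) + t • γ ≠ ⊤ :=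
      WithTop.add_ne_top.mpr ⟨hat_netop, wt_nsmul_ne_top hγtop t⟩
    exact ne_top_of_le_ne_top h2 h1
  have htrans := transfer hνk hQm hQnd hmin hQ'm hdeg' hγQ hγtop hγdiff φ hfin
  -- the b-truncation at γ equals the t-term
  have hVb : augVal (ch.ρ k) (ch.χ (k + 1)) γ φ
      = ch.ρ k (qCoeff (ch.χ (k + 1)) φ t) + t • γ := by
    refine le_antisymm (augVal_le_term hνk hQm hQnd φ t) ?_
    rw [augVal_def]
    refine Finset.le_inf fun s _ => ?_
    by_cases hseq : s = t
    · rw [hseq]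
    · exact (hbargmin s hseq).le
  have hVt : ch.ρ k (qCoeff (ch.χ (k + 1)) φ t) + t • γ
      = augVal (ch.ρ k) (ch.χ (l + 1)) γ φ := hVb.symm.trans htrans.1
  have hat_γ : ch.ρ k (qCoeff (ch.χ (l + 1)) φ t) + t • γ
      = augVal (ch.ρ k) (ch.χ (l + 1)) γ φ := (htrans.2 t).mp hVt
  have hstrictA : ∀ s, s ≠ t →
      ch.ρ k (qCoeff (ch.χ (l + 1)) φ t) + t • γ
        < ch.ρ k (qCoeff (ch.χ (l + 1)) φ s) + s • γ := by
    intro s hst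
    have hge : augVal (ch.ρ k) (ch.χ (l + 1)) γ φ
        ≤ ch.ρ k (qCoeff (ch.χ (l + 1)) φ s) + s • γ :=
      augVal_le_term hνk hQ'm hQ'nd φ s
    have hne : ch.ρ k (qCoeff (ch.χ (l + 1)) φ s) + s • γ
        ≠ augVal (ch.ρ k) (ch.χ (l + 1)) γ φ := by
      intro he
      have := (htrans.2 s).mpr he
      rw [hVt] at hbargmin
      exact absurd this (ne_of_gt (hbargmin s hst))
    rw [hat_γ]
    exact lt_of_le_of_ne hge (Ne.symm hne)
  ------------------------------------------------------------------
  -- strict minimality of the t-term at the value β1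
  ------------------------------------------------------------------
  have hA : ∀ s, s ≠ t →
      ch.ρ k (qCoeff (ch.χ (l + 1)) φ t) + t • (β1 : WithTop Λ)
        < ch.ρ k (qCoeff (ch.χ (l + 1)) φ s) + s • (β1 : WithTop Λ) := by
    intro s hst
    obtain ⟨at₀, hat⟩ := WithTop.ne_top_iff_exists.mp hat_netop
    by_cases hstop : ch.ρ k (qCoeff (ch.χ (l + 1)) φ s) = ⊤
    · rw [hstop, top_add, ← hat, wt_coe_term]
      exact WithTop.coe_lt_top _
    obtain ⟨u, hu⟩ := WithTop.ne_top_iff_exists.mp hstop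
    rw [← hat, ← hu, wt_coe_term, wt_coe_term, WithTop.coe_lt_coe]
    rcases lt_or_gt_of_ne hst with h | h
    -- s < t : from the level-(l+1) inequality
    · have hle := hMj_le s
      rw [← hMj_t, ← hat, ← hu, wt_coe_term, wt_coe_term, WithTop.coe_le_coe] at hle
      exact lambda_lt_aux h hβj hle
    -- s > t : lift the γ-inequality
    · have hlt := hstrictA s hst
      rw [← hat, ← hu, hγdef, wt_coe_term, wt_coe_term, WithTop.coe_lt_coe] at hlt
      exact lambda_lift_aux h hδpos hlt
  ------------------------------------------------------------------
  -- conclusion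
  ------------------------------------------------------------------
  have hterm1 : ∀ s, ch.ρ (k + 1) (qCoeff (ch.χ (l + 1)) φ s * ch.χ (l + 1) ^ s)
      = ch.ρ k (qCoeff (ch.χ (l + 1)) φ s) + s • (β1 : WithTop Λ) := by
    intro s
    rw [chain_term_val ch (by omega) hkl, chain_stable ch (hadeg s) (k + 1) k]
  have hWt_netop : ch.ρ k (qCoeff (ch.χ (l + 1)) φ t) + t • (β1 : WithTop Λ) ≠ ⊤ :=
    WithTop.add_ne_top.mpr ⟨hat_netop, wt_nsmul_ne_top WithTop.coe_ne_top t⟩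
  have hEsum : φ - qCoeff (ch.χ (l + 1)) φ t * ch.χ (l + 1) ^ t
      = ∑ s ∈ (Finset.range N).erase t,
          qCoeff (ch.χ (l + 1)) φ s * ch.χ (l + 1) ^ s := by
    have h := Finset.sum_erase_add (Finset.range N)
      (fun s => qCoeff (ch.χ (l + 1)) φ s * ch.χ (l + 1) ^ s)
      (Finset.mem_range.mpr (by omega : t < N))
    have hφsum : ∑ s ∈ Finset.range N, qCoeff (ch.χ (l + 1)) φ s * ch.χ (l + 1) ^ s = φ :=
      qCoeff_sum hQ'm hQ'nd φ
    rw [eq_comm, eq_sub_iff_add_eq, h, hφsum]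
  have hElarge : ch.ρ k (qCoeff (ch.χ (l + 1)) φ t) + t • (β1 : WithTop Λ)
      < ch.ρ (k + 1) (φ - qCoeff (ch.χ (l + 1)) φ t * ch.χ (l + 1) ^ t) := by
    rw [hEsum]
    refine hνk1.sum_lt hWt_netop _ _ fun s hs => ?_
    rw [hterm1 s]
    exact hA s (Finset.mem_erase.mp hs).1
  have hterm_t : ch.ρ (k + 1) (qCoeff (ch.χ (l + 1)) φ t * ch.χ (l + 1) ^ t)
      = ch.ρ k (qCoeff (ch.χ (l + 1)) φ t) + t • (β1 : WithTop Λ) := hterm1 t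
  have hφval : ch.ρ (k + 1) φ
      = ch.ρ k (qCoeff (ch.χ (l + 1)) φ t) + t • (β1 : WithTop Λ) := by
    have hsplit : φ = qCoeff (ch.χ (l + 1)) φ t * ch.χ (l + 1) ^ t
        + (φ - qCoeff (ch.χ (l + 1)) φ t * ch.χ (l + 1) ^ t) := by ring
    conv_lhs => rw [hsplit]
    rw [hνk1.add_eq_left (by rw [hterm_t]; exact hElarge), hterm_t]
  show ch.ρ (k + 1) φ
    < ch.ρ (k + 1) (φ - qCoeff (ch.χ (l + 1)) φ t * ch.χ (l + 1) ^ t)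
  rw [hφval]
  exact hElarge

end KeyPolPaper
end

section
/- Let (ρ_i, χ_i)_{i≥0} be an essential continuous MacLane chain of stable degree m on K[x]. For any two MLV limit key polynomials φ, ψ ∈ KP_∞ there exists an index i_0 such that φ ∼_{ρ_i} ψ for all i ≥ i_0. -/
open Polynomial

namespace KeyPolPaper

variable {K : Type*} [Field K] {Λ : Type*} [AddCommGroup Λ] [LinearOrder Λ] [IsOrderedAddMonoid Λ]

private lemma eq_zero_of_self_add {x : WithTop Λ} (hne : x ≠ ⊤) (h : x = x + x) :
    x = 0 := by
  lift x to Λ using hne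
  rw [← WithTop.coe_add, WithTop.coe_eq_coe] at h
  have : x + 0 = x + x := by rw [add_zero]; exact h
  rw [WithTop.coe_eq_zero]
  exact (add_left_cancel this).symm

private lemma IsValuation.one_eq_zero {F : Type*} [Field F] {w : F[X] → WithTop Λ}
    (hw : IsValuation w) : w 1 = 0 := by
  have hne : w 1 ≠ ⊤ := by
    have := hw.2.2.2 1 one_ne_zero
    rwa [map_one] at this
  have h := hw.2.1 1 1
  rw [one_mul] at h
  exact eq_zero_of_self_add hne h

private lemma IsValuation.neg_eq {F : Type*} [Field F] {w : F[X] → WithTop Λ}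
    (hw : IsValuation w) (f : F[X]) : w (-f) = w f := by
  have hCne : w (C (-1 : F)) ≠ ⊤ := hw.2.2.2 (-1) (by norm_num)
  have hmul := hw.2.1 (C (-1 : F)) (C (-1 : F))
  rw [← C_mul, neg_mul_neg, one_mul, map_one, hw.one_eq_zero] at hmul
  have hC0 : w (C (-1 : F)) = 0 := by
    lift w (C (-1 : F)) to Λ using hCne with u
    have h2 : u + u = 0 := by exact_mod_cast hmul.symm
    have h3 : u = 0 := by
      rcases lt_trichotomy u 0 with h | h | h
      · exact absurd (h2 ▸ add_neg h h) (lt_irrefl 0)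
      · exact h
      · exact absurd (h2 ▸ add_pos h h) (lt_irrefl 0)
    exact_mod_cast h3
  have h : w (C (-1 : F) * f) = w (C (-1 : F)) + w f := hw.2.1 _ f
  rw [hC0, zero_add] at h
  rw [← h]
  congr 1
  rw [map_neg, map_one, neg_one_mul]

private lemma IsValuation.sub_min {F : Type*} [Field F] {w : F[X] → WithTop Λ}
    (hw : IsValuation w) (f g : F[X]) : min (w f) (w g) ≤ w (f - g) := by
  have := hw.2.2.1 f (-g)
  rwa [hw.neg_eq g, ← sub_eq_add_neg] at this

/-- If `w (f - g) < w f` then `w g = w (f - g)`. -/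
private lemma IsValuation.val_of_sub {F : Type*} [Field F] {w : F[X] → WithTop Λ}
    (hw : IsValuation w) {f g : F[X]} (h : w (f - g) < w f) : w g = w (f - g) := by
  have hge : w (f - g) ≤ w g := by
    have := hw.sub_min f (f - g)
    rw [sub_sub_cancel] at this
    exact le_trans (le_min h.le le_rfl) this
  have hle : w g ≤ w (f - g) := by
    by_contra hlt
    push_neg at hlt
    exact absurd (hw.sub_min f g) (not_le.mpr (lt_min h hlt))
  exact le_antisymm hle hge

private lemma MacLaneChain.rho_mono (ch : MacLaneChain K Λ) (f : K[X]) :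
    Monotone fun i => ch.ρ i f :=
  monotone_nat_of_le_succ fun i => (ch.mono i).1 f

variable [Module ℚ Λ]

/-- any two MLV limit key polynomials of the chain are eventually
`ρ_i`-equivalent. -/
theorem stmt16 (ch : MacLaneChain K Λ) (hess : ch.Essential)
    (φ ψ : K[X]) (hφ : ch.IsLimKP φ) (hψ : ch.IsLimKP ψ) :
    ∃ i0 : ℕ, ∀ i : ℕ, i0 ≤ i → VEquiv (ch.ρ i) φ ψ := by
  obtain ⟨hφm, hφns, hφmin⟩ := hφ
  obtain ⟨hψm, hψns, hψmin⟩ := hψ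
  by_cases hfg : φ = ψ
  · subst hfg
    refine ⟨0, fun i _ => ?_⟩
    unfold VEquiv
    rw [sub_self, (ch.isVal i).1]
    refine lt_top_iff_ne_top.mpr fun htop => hφns ⟨i, fun j hj => ?_⟩
    have : (⊤ : WithTop Λ) ≤ ch.ρ j φ := htop ▸ ch.rho_mono φ hj
    rw [top_le_iff.mp this, htop]
  · -- `φ - ψ` has smaller degree, hence is stable
    have hφ0 : φ ≠ 0 := hφm.ne_zero
    have hψ0 : ψ ≠ 0 := hψm.ne_zero
    have hdeg : φ.natDegree = ψ.natDegree := le_antisymm (hφmin ψ hψns) (hψmin φ hφns)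
    have hsub0 : φ - ψ ≠ 0 := sub_ne_zero.mpr hfg
    have hdltd : (φ - ψ).degree < φ.degree := by
      refine Polynomial.degree_sub_lt ?_ hφ0 ?_
      · rw [Polynomial.degree_eq_natDegree hφ0, Polynomial.degree_eq_natDegree hψ0, hdeg]
      · rw [hφm.leadingCoeff, hψm.leadingCoeff]
    have hdlt : (φ - ψ).natDegree < φ.natDegree :=
      Polynomial.natDegree_lt_natDegree hsub0 hdltd
    have hstab : ch.Stable (φ - ψ) := by
      by_contra h
      exact absurd (hφmin _ h) (not_le.mpr hdlt)
    obtain ⟨j0, hj0⟩ := hstab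
    set c := ch.ρ j0 (φ - ψ) with hc
    refine ⟨j0, fun i hi => ?_⟩
    unfold VEquiv
    rw [hj0 i hi]
    by_contra hge
    push_neg at hge
    -- so `c ≤ ρ i φ`; use non-stability of `φ` to find a strictly bigger value
    have hns : ¬ ∀ k, i ≤ k → ch.ρ k φ = ch.ρ i φ := fun h => hφns ⟨i, h⟩
    push_neg at hns
    obtain ⟨j, hij, hne⟩ := hns
    have hjlt : c < ch.ρ j φ :=
      lt_of_le_of_lt hge (lt_of_le_of_ne (ch.rho_mono φ hij) (Ne.symm hne))
    -- then `ψ` would be stable with value `c`, a contradiction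
    apply hψns
    have hval : ∀ k, j ≤ k → ch.ρ k ψ = c := by
      intro k hk
      have h1 : c < ch.ρ k φ := lt_of_lt_of_le hjlt (ch.rho_mono φ hk)
      have h2 : ch.ρ k (φ - ψ) = c := hj0 k (le_trans hi (le_trans hij hk))
      have := (ch.isVal k).val_of_sub (f := φ) (g := ψ) (by rw [h2]; exact h1)
      rw [this, h2]
    exact ⟨j, fun k hk => by rw [hval k hk, hval j le_rfl]⟩

end KeyPolPaper
end
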